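/- For all x ≥ 0, x·φ(x)/(2Φ(x) - 1) ≤ 1/2, with equality if and only if x = 0 (interpreting the left side as its limit 1/2 at x = 0). -/
import Mathlib

noncomputable def stdPhi (x : ℝ) : ℝ := (Real.sqrt (2 * Real.pi))⁻¹ * Real.exp (-x ^ 2 / 2)

noncomputable def stdCDF (x : ℝ) : ℝ := ∫ t in Set.Iic x, stdPhi t

noncomputable def Mratio (x : ℝ) : ℝ :=
  if x = 0 then 1 / 2 else x * stdPhi x / (2 * stdCDF x - 1)

open Real MeasureTheory Set

lemma stdPhi_eq (x : ℝ) : stdPhi x = (Real.sqrt (2 * Real.pi))⁻¹ * Real.exp (-(1/2) * x ^ 2) := by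
  unfold stdPhi; ring_nf

lemma stdPhi_pos (x : ℝ) : 0 < stdPhi x := by
  unfold stdPhi
  positivity

lemma stdPhi_integrable : Integrable stdPhi := by
  have h := (integrable_exp_neg_mul_sq (by norm_num : (0:ℝ) < 1/2)).const_mul
    (Real.sqrt (2 * Real.pi))⁻¹
  exact h.congr (Filter.Eventually.of_forall fun x => (stdPhi_eq x).symm)

lemma stdPhi_continuous : Continuous stdPhi := by
  unfold stdPhi
  fun_prop

lemma stdPhi_total : ∫ x, stdPhi x = 1 := by
  simp_rw [stdPhi_eq]
  rw [MeasureTheory.integral_const_mul, integral_gaussian (1/2)]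
  rw [inv_mul_eq_one₀ (by positivity)]
  norm_num
  ring

lemma stdPhi_even (x : ℝ) : stdPhi (-x) = stdPhi x := by
  unfold stdPhi; ring_nf

lemma stdCDF_zero : stdCDF 0 = 1 / 2 := by
  have hsplit : (∫ t in Iic (0:ℝ), stdPhi t) + (∫ t in Ioi (0:ℝ), stdPhi t) = 1 := by
    rw [← stdPhi_total, ← setIntegral_union (Iic_disjoint_Ioi le_rfl) measurableSet_Ioi
      stdPhi_integrable.integrableOn stdPhi_integrable.integrableOn, Iic_union_Ioi,
      Measure.restrict_univ]
  have hsym : (∫ t in Iic (0:ℝ), stdPhi t) = ∫ t in Ioi (0:ℝ), stdPhi t := by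
    rw [show (Ioi (0:ℝ)) = Ioi (-(0:ℝ)) by norm_num, ← integral_comp_neg_Iic]
    simp [stdPhi_even]
  unfold stdCDF
  rw [hsym] at hsplit ⊢
  linarith

lemma stdCDF_diff (x : ℝ) (hx : 0 ≤ x) :
    stdCDF x - 1 / 2 = ∫ t in (0:ℝ)..x, stdPhi t := by
  rw [← stdCDF_zero]
  unfold stdCDF
  rw [intervalIntegral.integral_of_le hx]
  have h : (∫ t in Iic (0:ℝ), stdPhi t) + (∫ t in Ioc (0:ℝ) x, stdPhi t)
      = ∫ t in Iic x, stdPhi t := by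
    rw [← setIntegral_union (Iic_disjoint_Ioc le_rfl) measurableSet_Ioc
      stdPhi_integrable.integrableOn stdPhi_integrable.integrableOn, Iic_union_Ioc_eq_Iic hx]
  linarith

lemma key_strict (x : ℝ) (hx : 0 < x) : x * stdPhi x < ∫ t in (0:ℝ)..x, stdPhi t := by
  have h : (∫ t in (0:ℝ)..x, stdPhi x) < ∫ t in (0:ℝ)..x, stdPhi t := by
    apply intervalIntegral.integral_lt_integral_of_continuousOn_of_le_of_exists_lt hx
      continuousOn_const stdPhi_continuous.continuousOn
    · intro t ht
      have ht2 : t ^ 2 ≤ x ^ 2 := by nlinarith [ht.1, ht.2]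
      unfold stdPhi
      exact mul_le_mul_of_nonneg_left (Real.exp_le_exp.mpr (by linarith)) (by positivity)
    · refine ⟨0, ⟨le_rfl, hx.le⟩, ?_⟩
      unfold stdPhi
      have : Real.exp (-x ^ 2 / 2) < Real.exp (-(0:ℝ) ^ 2 / 2) :=
        Real.exp_lt_exp.mpr (by nlinarith)
      have h0 : (0:ℝ) < (Real.sqrt (2 * Real.pi))⁻¹ := by positivity
      nlinarith
  calc x * stdPhi x = ∫ t in (0:ℝ)..x, stdPhi x := by
        rw [intervalIntegral.integral_const, smul_eq_mul]; ring
    _ < _ := h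

theorem normal_upper_bound :
    ∀ x : ℝ, 0 ≤ x → Mratio x ≤ 1 / 2 ∧ (Mratio x = 1 / 2 ↔ x = 0) := by
  intro x hx
  rcases eq_or_lt_of_le hx with h0 | hpos
  · subst h0
    simp [Mratio]
  · have hkey := key_strict x hpos
    have hnum : 0 < x * stdPhi x := mul_pos hpos (stdPhi_pos x)
    have hden : 2 * stdCDF x - 1 = 2 * ∫ t in (0:ℝ)..x, stdPhi t := by
      have := stdCDF_diff x hpos.le
      linarith
    have hdenpos : 0 < 2 * stdCDF x - 1 := by
      rw [hden]; linarith
    have hlt : Mratio x < 1 / 2 := by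
      rw [Mratio, if_neg hpos.ne']
      rw [div_lt_iff₀ hdenpos, hden]
      linarith
    exact ⟨hlt.le, by constructor <;> intro h <;> [exact absurd h hlt.ne; exact absurd h hpos.ne']⟩
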